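/- If D is a symmetric 2x2 matrix of the form [[k_e*k_u*a + k_u^2*K_D*g^2, k_a*k_u*K_D*g], [k_a*k_u*K_D*g, k_e*k_a + k_a^2*K_D]] with k_e, k_a, K_D > 0, k_u < 0, a > 0, g ≠ 0, and k_u ≤ -(a/g^2)*(k_a + k_e/K_D) - ε for some ε > 0, then det(D) > 0 and the (2,2) entry of D is positive, hence D is positive definite. -/

import Mathlib

theorem stmt_0 (ke ka KD ku a g ε : ℝ)
    (hke : 0 < ke) (hka : 0 < ka) (hKD : 0 < KD) (hku : ku < 0)
    (ha : 0 < a) (hg : g ≠ 0) (hε : 0 < ε)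
    (hcond : ku ≤ -(a / g ^ 2) * (ka + ke / KD) - ε)
    (D : Matrix (Fin 2) (Fin 2) ℝ)
    (hD : D = !![ke * ku * a + ku ^ 2 * KD * g ^ 2, ka * ku * KD * g;
                 ka * ku * KD * g, ke * ka + ka ^ 2 * KD]) :
    0 < D.det ∧ 0 < D 1 1 ∧ D.PosDef := by
  have hg2 : (0:ℝ) < g ^ 2 := by positivity
  have hcond' : ku * (KD * g ^ 2) ≤ -(a * (ka * KD + ke)) - ε * (KD * g ^ 2) := by
    have h := mul_le_mul_of_nonneg_right hcond (mul_pos hKD hg2).le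
    have heq : (-(a / g ^ 2) * (ka + ke / KD) - ε) * (KD * g ^ 2)
        = -(a * (ka * KD + ke)) - ε * (KD * g ^ 2) := by
      field_simp
    linarith [heq ▸ h]
  -- abbreviations
  set A := ke * ku * a + ku ^ 2 * KD * g ^ 2 with hA_def
  set B := ka * ku * KD * g with hB_def
  set C := ke * ka + ka ^ 2 * KD with hC_def
  have hneg : ke * a + ka * KD * a + ku * KD * g ^ 2 < 0 := by
    nlinarith [mul_pos hKD hg2, mul_pos hε (mul_pos hKD hg2)]
  have hA : 0 < A := by
    have : ke * a + ku * KD * g ^ 2 < 0 := by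
      nlinarith [mul_pos (mul_pos hka hKD) ha]
    nlinarith
  have hC : 0 < C := by positivity
  have hdet : 0 < A * C - B ^ 2 := by
    have : A * C - B ^ 2 = ke * ka * ku * (ke * a + ka * KD * a + ku * KD * g ^ 2) := by
      rw [hA_def, hB_def, hC_def]; ring
    rw [this]
    exact mul_pos_of_neg_of_neg (by nlinarith [mul_pos hke hka]) hneg
  have hdetD : D.det = A * C - B ^ 2 := by
    rw [hD, Matrix.det_fin_two_of]; ring
  refine ⟨by rw [hdetD]; exact hdet, by rw [hD]; simpa using hC, ?_⟩
  rw [Matrix.posDef_iff_dotProduct_mulVec]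
  constructor
  · rw [hD, Matrix.IsHermitian]
    ext i j
    fin_cases i <;> fin_cases j <;> simp [Matrix.conjTranspose_apply]
  · intro x hx
    have hq : dotProduct (star x) (D.mulVec x)
        = A * (x 0) ^ 2 + 2 * B * (x 0) * (x 1) + C * (x 1) ^ 2 := by
      rw [hD]
      simp [Matrix.mulVec, dotProduct, Fin.sum_univ_two]
      ring
    rw [hq]
    rcases eq_or_ne (x 1) 0 with h1 | h1
    · have h0 : x 0 ≠ 0 := by
        intro h0; apply hx; ext i; fin_cases i <;> simp [h0, h1]
      have : 0 < (x 0) ^ 2 := by positivity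
      rw [h1]; nlinarith
    · have : 0 < (x 1) ^ 2 := by positivity
      nlinarith [sq_nonneg (A * x 0 + B * x 1), mul_pos hdet this]
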